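/- (Bundle demand, Case 3) Let q1, q2 > 0 and let (θ1, θ2) be uniformly distributed on the unit square [0, 1]². Then for every bundle subscription fee p with q1 ≤ p ≤ q2, the probability that θ1·q1 + θ2·q2 ≥ p equals (1/2)·((1 − p/q2) + (1 − (p − q1)/q2)) = 1 − p/q2 + q1/(2·q2). -/

import Mathlib

open Real Set MeasureTheory

/-- Bundle demand, Case 3: Let `q1, q2 > 0` and let `(θ1, θ2)` be
uniformly distributed on `[0, 1]²`. For every bundle fee `p` with `q1 ≤ p ≤ q2`,
the probability that `θ1 * q1 + θ2 * q2 ≥ p` equals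
`(1/2) * ((1 - p / q2) + (1 - (p - q1) / q2)) = 1 - p / q2 + q1 / (2 * q2)`. -/
theorem bundle_demand_case3 (q1 q2 p : ℝ) (hq1 : 0 < q1) (hq2 : 0 < q2)
    (hp1 : q1 ≤ p) (hp2 : p ≤ q2) :
    MeasureTheory.volume
        {θ : ℝ × ℝ | θ.1 ∈ Set.Icc (0 : ℝ) 1 ∧ θ.2 ∈ Set.Icc (0 : ℝ) 1 ∧
          p ≤ θ.1 * q1 + θ.2 * q2}
      = ENNReal.ofReal ((1 / 2) * ((1 - p / q2) + (1 - (p - q1) / q2))) ∧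
    (1 / 2 : ℝ) * ((1 - p / q2) + (1 - (p - q1) / q2)) = 1 - p / q2 + q1 / (2 * q2) := by
  have hq2' : q2 ≠ 0 := hq2.ne'
  constructor
  · -- rewrite the set as a region between graphs
    have hset : {θ : ℝ × ℝ | θ.1 ∈ Set.Icc (0 : ℝ) 1 ∧ θ.2 ∈ Set.Icc (0 : ℝ) 1 ∧
          p ≤ θ.1 * q1 + θ.2 * q2}
        = {θ : ℝ × ℝ | θ.1 ∈ Icc (0:ℝ) 1 ∧ θ.2 ∈ Icc ((p - θ.1 * q1) / q2) 1} := by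
      ext ⟨x, y⟩
      simp only [mem_setOf_eq, mem_Icc]
      constructor
      · rintro ⟨hx, ⟨hy0, hy1⟩, hpb⟩
        refine ⟨hx, ?_, hy1⟩
        rw [div_le_iff₀ hq2]; linarith
      · rintro ⟨hx, hyl, hy1⟩
        have h0 : 0 ≤ (p - x * q1) / q2 := by
          apply div_nonneg _ hq2.le
          nlinarith [hx.1, hx.2]
        refine ⟨hx, ⟨le_trans h0 hyl, hy1⟩, ?_⟩
        rw [div_le_iff₀ hq2] at hyl; linarith
    have hmeas : MeasurableSet
        {θ : ℝ × ℝ | θ.1 ∈ Icc (0:ℝ) 1 ∧ θ.2 ∈ Icc ((p - θ.1 * q1) / q2) 1} := by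
      have h1 : MeasurableSet {θ : ℝ × ℝ | θ.1 ∈ Icc (0:ℝ) 1} :=
        measurable_fst measurableSet_Icc
      have h2 : MeasurableSet {θ : ℝ × ℝ | (p - θ.1 * q1) / q2 ≤ θ.2} :=
        measurableSet_le (((measurable_const.sub (measurable_fst.mul measurable_const)).div
          measurable_const)) measurable_snd
      have h3 : MeasurableSet {θ : ℝ × ℝ | θ.2 ≤ (1:ℝ)} :=
        measurableSet_le measurable_snd measurable_const
      have : {θ : ℝ × ℝ | θ.1 ∈ Icc (0:ℝ) 1 ∧ θ.2 ∈ Icc ((p - θ.1 * q1) / q2) 1}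
          = {θ : ℝ × ℝ | θ.1 ∈ Icc (0:ℝ) 1} ∩
            ({θ : ℝ × ℝ | (p - θ.1 * q1) / q2 ≤ θ.2} ∩ {θ : ℝ × ℝ | θ.2 ≤ (1:ℝ)}) := by
        ext ⟨x, y⟩; simp [mem_Icc, and_assoc]
      rw [this]
      exact h1.inter (h2.inter h3)
    rw [hset, MeasureTheory.Measure.volume_eq_prod, Measure.prod_apply hmeas]
    have hslice : ∀ x : ℝ,
        volume (Prod.mk x ⁻¹' {θ : ℝ × ℝ | θ.1 ∈ Icc (0:ℝ) 1 ∧ θ.2 ∈ Icc ((p - θ.1 * q1) / q2) 1})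
        = Set.indicator (Icc (0:ℝ) 1)
            (fun x => ENNReal.ofReal (1 - (p - x * q1) / q2)) x := by
      intro x
      by_cases hx : x ∈ Icc (0:ℝ) 1
      · have hpre : Prod.mk x ⁻¹'
            {θ : ℝ × ℝ | θ.1 ∈ Icc (0:ℝ) 1 ∧ θ.2 ∈ Icc ((p - θ.1 * q1) / q2) 1}
            = Icc ((p - x * q1) / q2) 1 := by
          ext y; simp only [Set.mem_preimage, Set.mem_setOf_eq, hx, true_and]
        rw [hpre, Real.volume_Icc, Set.indicator_of_mem hx]
      · have hpre : Prod.mk x ⁻¹'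
            {θ : ℝ × ℝ | θ.1 ∈ Icc (0:ℝ) 1 ∧ θ.2 ∈ Icc ((p - θ.1 * q1) / q2) 1}
            = ∅ := by
          ext y
          simp only [Set.mem_preimage, Set.mem_setOf_eq, Set.mem_empty_iff_false, iff_false]
          exact fun h => hx h.1
        rw [hpre, Set.indicator_of_notMem hx]; simp
    simp_rw [hslice]
    rw [lintegral_indicator measurableSet_Icc]
    have hcont : Continuous fun x : ℝ => 1 - (p - x * q1) / q2 := by
      continuity
    have hInt : IntegrableOn (fun x : ℝ => 1 - (p - x * q1) / q2) (Icc 0 1) volume :=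
      hcont.continuousOn.integrableOn_compact isCompact_Icc
    have hnn : 0 ≤ᵐ[volume.restrict (Icc (0:ℝ) 1)] fun x : ℝ => 1 - (p - x * q1) / q2 := by
      refine (ae_restrict_iff' measurableSet_Icc).2 (ae_of_all _ ?_)
      intro x hx
      show (0:ℝ) ≤ 1 - (p - x * q1) / q2
      have : (p - x * q1) / q2 ≤ 1 := by
        rw [div_le_one hq2]
        nlinarith [hx.1, hx.2]
      linarith
    rw [← MeasureTheory.ofReal_integral_eq_lintegral_ofReal hInt hnn]
    congr 1
    have heq : ∀ x : ℝ, 1 - (p - x * q1) / q2 = (1 - p / q2) + x * (q1 / q2) := by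
      intro x; field_simp; ring
    simp_rw [heq]
    rw [MeasureTheory.integral_Icc_eq_integral_Ioc,
      ← intervalIntegral.integral_of_le (zero_le_one)]
    have hii : IntervalIntegrable (fun x : ℝ => x * (q1 / q2)) volume 0 1 := by
      apply Continuous.intervalIntegrable; continuity
    rw [intervalIntegral.integral_add intervalIntegrable_const hii]
    rw [intervalIntegral.integral_const, intervalIntegral.integral_mul_const, integral_id]
    field_simp
    linear_combination (2 * q2 - 2 * p) * mul_inv_cancel₀ hq2'
  · field_simp
    ring
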